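/- Let B_w be a bounded weighted backward shift on ℓ^p(ℕ), 1 ≤ p < ∞, let x ∈ ℓ^p(ℕ), and let A = {n ∈ ℕ : ‖B_wⁿx − e_0‖ ≤ 1/2}. Then for every n ∈ A, Σ_{m>n, m∈A} 1/|w_1⋯w_{m−n}|^p ≤ 1. -/

import Mathlib

open scoped ENNReal

/-- For a bounded weighted backward shift `B_w` on `ℓ^p(ℕ)` and
`A = {n : ‖B_wⁿx − e₀‖ ≤ 1/2}`, for every `n ∈ A` one has
`Σ_{m ∈ A, m > n} 1/|w₁⋯w_{m−n}|^p ≤ 1`. -/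
theorem weighted_shift_return_sum_bound (p : ℝ≥0∞) [Fact (1 ≤ p)] (hp' : p ≠ ⊤)
    (w : ℕ → ℝ)
    (B : lp (fun _ : ℕ => ℝ) p →L[ℝ] lp (fun _ : ℕ => ℝ) p)
    (hB : ∀ (y : lp (fun _ : ℕ => ℝ) p) (i : ℕ),
      (B y : ∀ _ : ℕ, ℝ) i = w (i + 1) * (y : ∀ _ : ℕ, ℝ) (i + 1))
    (x : lp (fun _ : ℕ => ℝ) p)
    (A : Set ℕ)
    (hA : A = {n : ℕ | ‖(B ^ n) x - lp.single p 0 1‖ ≤ 1 / 2}) :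
    ∀ n ∈ A,
      (∑' m : {m : ℕ // m ∈ A ∧ n < m},
        ENNReal.ofReal (1 / |∏ ν ∈ Finset.Icc 1 ((m : ℕ) - n), w ν| ^ p.toReal)) ≤ 1 := by
  have hp1 : (1 : ℝ≥0∞) ≤ p := Fact.out
  have hq1 : (1 : ℝ) ≤ p.toReal := by
    rw [← ENNReal.toReal_one]
    exact ENNReal.toReal_mono hp' hp1
  set q := p.toReal with hqdef
  have hq0 : 0 < q := lt_of_lt_of_le one_pos hq1
  have hp0 : p ≠ 0 := fun h => by simp [h] at hp1
  -- coordinate formula for B^n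
  have hBn : ∀ (n : ℕ) (y : lp (fun _ : ℕ => ℝ) p) (i : ℕ),
      ((B ^ n) y : ∀ _ : ℕ, ℝ) i = (∏ ν ∈ Finset.Ioc i (i + n), w ν) * y (i + n) := by
    intro n
    induction n with
    | zero => intro y i; simp
    | succ n ih =>
      intro y i
      have : (B ^ (n + 1)) y = (B ^ n) (B y) := by
        rw [pow_succ]; rfl
      rw [this, ih (B y) i, hB y (i + n)]
      have hsplit : (∏ ν ∈ Finset.Ioc i (i + (n + 1)), w ν)
          = (∏ ν ∈ Finset.Ioc i (i + n), w ν) * w (i + n + 1) := by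
        rw [← add_assoc, Finset.prod_Ioc_succ_top (by omega)]
      rw [hsplit]
      ring_nf
  -- for m ∈ A : 1/2 ≤ |W_m * x m|
  have hAprod : ∀ m ∈ A, 1 / 2 ≤ |(∏ ν ∈ Finset.Ioc 0 m, w ν) * x m| := by
    intro m hm
    rw [hA] at hm
    have hnorm : ‖(B ^ m) x - lp.single p 0 1‖ ≤ 1 / 2 := hm
    have hco := lp.norm_apply_le_norm hp0 ((B ^ m) x - lp.single p 0 1) 0
    rw [lp.coeFn_sub] at hco
    simp only [Pi.sub_apply] at hco
    rw [hBn m x 0, lp.single_apply_self] at hco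
    simp only [zero_add, Real.norm_eq_abs] at hco
    have h1 : |(∏ ν ∈ Finset.Ioc 0 m, w ν) * x m - 1| ≤ 1 / 2 := hco.trans hnorm
    have := abs_sub_abs_le_abs_sub (1:ℝ) ((∏ ν ∈ Finset.Ioc 0 m, w ν) * x m)
    rw [abs_one, abs_sub_comm] at this
    linarith
  intro n hn
  set y := (B ^ n) x - lp.single p 0 1 with hy
  have hny : ‖y‖ ≤ 1 / 2 := by rw [hA] at hn; exact hn
  -- coordinate of y at k ≥ 1
  have hyk : ∀ k : ℕ, 0 < k → (y : ∀ _ : ℕ, ℝ) k = (∏ ν ∈ Finset.Ioc k (k + n), w ν) * x (k + n) := by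
    intro k hk
    rw [hy, lp.coeFn_sub]
    simp only [Pi.sub_apply]
    rw [hBn n x k, lp.single_apply_ne p 0 1 (by omega : k ≠ 0), sub_zero]
  -- pointwise bound
  have hpt : ∀ m : {m : ℕ // m ∈ A ∧ n < m},
      ENNReal.ofReal (1 / |∏ ν ∈ Finset.Icc 1 ((m : ℕ) - n), w ν| ^ q)
        ≤ ENNReal.ofReal ((2 : ℝ) ^ q * |(y : ∀ _ : ℕ, ℝ) ((m : ℕ) - n)| ^ q) := by
    rintro ⟨m, hmA, hmn⟩
    simp only
    set k := m - n with hk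
    have hk0 : 0 < k := by omega
    have hkn : k + n = m := by omega
    have hicc : Finset.Icc 1 k = Finset.Ioc 0 k := by rw [← Finset.Icc_add_one_left_eq_Ioc, zero_add]
    rw [hicc]
    have hprod : (∏ ν ∈ Finset.Ioc 0 k, w ν) * ∏ ν ∈ Finset.Ioc k m, w ν
        = ∏ ν ∈ Finset.Ioc 0 m, w ν :=
      Finset.prod_Ioc_consecutive w (by omega) (by omega)
    have hykv : (y : ∀ _ : ℕ, ℝ) k = (∏ ν ∈ Finset.Ioc k m, w ν) * x m := by
      rw [hyk k hk0, hkn]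
    have hkey : 1 / 2 ≤ |∏ ν ∈ Finset.Ioc 0 k, w ν| * |(y : ∀ _ : ℕ, ℝ) k| := by
      have := hAprod m hmA
      rw [hykv, ← abs_mul, ← mul_assoc, hprod]
      exact this
    set a := |∏ ν ∈ Finset.Ioc 0 k, w ν| with ha
    set b := |(y : ∀ _ : ℕ, ℝ) k| with hb
    have ha0 : 0 ≤ a := abs_nonneg _
    have hb0 : 0 ≤ b := abs_nonneg _
    have hapos : 0 < a := by nlinarith
    have h1 : 1 / a ≤ 2 * b := by
      rw [div_le_iff₀ hapos]
      nlinarith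
    have h2 : (1 / a) ^ q ≤ (2 * b) ^ q :=
      Real.rpow_le_rpow (by positivity) h1 hq0.le
    rw [Real.div_rpow zero_le_one ha0, Real.one_rpow, Real.mul_rpow (by norm_num) hb0] at h2
    exact ENNReal.ofReal_le_ofReal h2
  -- injectivity
  have hinj : Function.Injective (fun m : {m : ℕ // m ∈ A ∧ n < m} => (m : ℕ) - n) := by
    rintro ⟨a, _, ha⟩ ⟨b, _, hb⟩ h
    simp only [Subtype.mk.injEq]
    simp only at h
    omega
  have hsummable : Summable fun k : ℕ => ‖(y : ∀ _ : ℕ, ℝ) k‖ ^ q :=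
    (lp.memℓp y).summable hq0
  calc (∑' m : {m : ℕ // m ∈ A ∧ n < m},
        ENNReal.ofReal (1 / |∏ ν ∈ Finset.Icc 1 ((m : ℕ) - n), w ν| ^ q))
      ≤ ∑' m : {m : ℕ // m ∈ A ∧ n < m},
        ENNReal.ofReal ((2 : ℝ) ^ q * |(y : ∀ _ : ℕ, ℝ) ((m : ℕ) - n)| ^ q) :=
        ENNReal.tsum_le_tsum hpt
    _ ≤ ∑' k : ℕ, ENNReal.ofReal ((2 : ℝ) ^ q * |(y : ∀ _ : ℕ, ℝ) k| ^ q) :=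
        ENNReal.tsum_comp_le_tsum_of_injective hinj _
    _ = ENNReal.ofReal ((2 : ℝ) ^ q) * ∑' k : ℕ, ENNReal.ofReal (|(y : ∀ _ : ℕ, ℝ) k| ^ q) := by
        rw [← ENNReal.tsum_mul_left]
        congr 1 with k
        rw [ENNReal.ofReal_mul (by positivity)]
    _ = ENNReal.ofReal ((2 : ℝ) ^ q) * ENNReal.ofReal (‖y‖ ^ q) := by
        congr 1
        rw [lp.norm_rpow_eq_tsum hq0,
          ENNReal.ofReal_tsum_of_nonneg (fun k => by positivity) hsummable]
        simp [Real.norm_eq_abs]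
    _ ≤ ENNReal.ofReal ((2 : ℝ) ^ q) * ENNReal.ofReal ((1 / 2 : ℝ) ^ q) := by
        exact mul_le_mul_right (ENNReal.ofReal_le_ofReal
          (Real.rpow_le_rpow (norm_nonneg _) hny hq0.le)) _
    _ = 1 := by
        have h2q : (2 : ℝ) ^ q * (1 / 2 : ℝ) ^ q = 1 := by
          rw [← Real.mul_rpow (by norm_num) (by norm_num)]
          norm_num
        rw [← ENNReal.ofReal_mul (by positivity), h2q, ENNReal.ofReal_one]
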